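/- For any differential k-form η on the standard n-simplex with affine coefficients whose pullback to each k-face is a constant form, if the integral of η over every k-face is zero, then η is identically zero. -/

import Mathlib

open MeasureTheory Finset

/-- A real-valued function on `ℝⁿ` is affine if it has the form `x ↦ ∑ aᵢ xⁱ + b`. -/
def IsAffineFn {n : ℕ} (f : (Fin n → ℝ) → ℝ) : Prop :=
  ∃ (a : Fin n → ℝ) (b : ℝ), ∀ x, f x = (∑ i, a i * x i) + b

/-- The standard `n`-simplex `{x : xⁱ ≥ 0, ∑ xⁱ ≤ 1}` in `ℝⁿ`. -/
def stdSimp (n : ℕ) : Set (Fin n → ℝ) :=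
  {x | (∀ i, 0 ≤ x i) ∧ (∑ i, x i) ≤ 1}

/-- The basic alternating `k`-form `dx^I` (for a strictly increasing multi-index given by a
`k`-element subset `I` of `{1,…,n}`) evaluated on `k` vectors. -/
def dxI {n k : ℕ} (I : {s : Finset (Fin n) // s.card = k}) (v : Fin k → Fin n → ℝ) : ℝ :=
  Matrix.det (Matrix.of fun i j => v j ((I.1.orderIsoOfFin I.2 i : Fin n)))

/-- The `k`-form `∑_I f_I dx^I` with coefficient functions `f_I`, evaluated at the point `x`
on the `k` vectors `v`. -/
def formEval {n k : ℕ} (f : {s : Finset (Fin n) // s.card = k} → (Fin n → ℝ) → ℝ)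
    (x : Fin n → ℝ) (v : Fin k → Fin n → ℝ) : ℝ :=
  ∑ I : {s : Finset (Fin n) // s.card = k}, f I x * dxI I v

/-- The vertices of the standard `n`-simplex: `p₀ = 0`, `pᵢ = eᵢ`. -/
def vert (n : ℕ) : Fin (n+1) → Fin n → ℝ :=
  Fin.cases 0 (fun j => Pi.single j 1)

/-- Affine parametrization of the `k`-face of the standard `n`-simplex with vertex set `S`
(vertices taken in increasing order), defined on the standard `k`-simplex. -/
def facePt {n k : ℕ} (S : {s : Finset (Fin (n+1)) // s.card = k+1}) (y : Fin k → ℝ) :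
    Fin n → ℝ :=
  vert n ((S.1.orderIsoOfFin S.2 0 : Fin (n+1))) +
    ∑ s : Fin k, y s • (vert n ((S.1.orderIsoOfFin S.2 s.succ : Fin (n+1))) -
      vert n ((S.1.orderIsoOfFin S.2 0 : Fin (n+1))))

/-- The differential of the face parametrization `facePt S`. -/
def faceDir {n k : ℕ} (S : {s : Finset (Fin (n+1)) // s.card = k+1}) (w : Fin k → ℝ) :
    Fin n → ℝ :=
  ∑ s : Fin k, w s • (vert n ((S.1.orderIsoOfFin S.2 s.succ : Fin (n+1))) -
    vert n ((S.1.orderIsoOfFin S.2 0 : Fin (n+1))))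

/-- Barycentric coordinates of the standard `n`-simplex: `ν₀ = 1 - ∑ xⁱ`, `νᵢ = xⁱ`. -/
def nu (n : ℕ) (j : Fin (n+1)) (x : Fin n → ℝ) : ℝ :=
  Fin.cases (1 - ∑ i, x i) (fun i => x i) j

/-- The differentials `dνⱼ` of the barycentric coordinates, as linear functionals. -/
def dnu (n : ℕ) (j : Fin (n+1)) (v : Fin n → ℝ) : ℝ :=
  Fin.cases (-(∑ i, v i)) (fun i => v i) j

/-- The Whitney form `W τ* = k! ∑ⱼ (-1)ʲ ν_{iⱼ} dν_{i₀} ∧ ⋯ ∧ (omit dν_{iⱼ}) ∧ ⋯ ∧ dν_{i_k}`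
of the dual cochain of the face with vertex set `S`, evaluated at `x` on the vectors `v`. -/
def whitneyFace {n k : ℕ} (S : {s : Finset (Fin (n+1)) // s.card = k+1})
    (x : Fin n → ℝ) (v : Fin k → Fin n → ℝ) : ℝ :=
  (Nat.factorial k : ℝ) * ∑ j : Fin (k+1), (-1 : ℝ) ^ (j : ℕ) *
    nu n ((S.1.orderIsoOfFin S.2 j : Fin (n+1))) x *
    Matrix.det (Matrix.of fun (t : Fin k) (m2 : Fin k) =>
      dnu n ((S.1.orderIsoOfFin S.2 (j.succAbove t) : Fin (n+1))) (v m2))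

/-- The Whitney map `W`, extended linearly to all real `k`-cochains. -/
def whitney {n k : ℕ} (c : {s : Finset (Fin (n+1)) // s.card = k+1} → ℝ)
    (x : Fin n → ℝ) (v : Fin k → Fin n → ℝ) : ℝ :=
  ∑ S, c S * whitneyFace S x v

/-- The integral of a `k`-form (given by its evaluation function `F`) over the `k`-face with
vertex set `S`, computed via the parametrization `facePt S`. -/
noncomputable def faceIntegral {n k : ℕ} (S : {s : Finset (Fin (n+1)) // s.card = k+1})
    (F : (Fin n → ℝ) → (Fin k → Fin n → ℝ) → ℝ) : ℝ :=
  ∫ y in stdSimp k, F (facePt S y) (fun s => faceDir S (Pi.single s 1))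

/-- A `k`-form (given by its evaluation function) pulls back to a constant form on every
`k`-face of the standard `n`-simplex. -/
def ConstOnFaces {n k : ℕ} (F : (Fin n → ℝ) → (Fin k → Fin n → ℝ) → ℝ) : Prop :=
  ∀ S : {s : Finset (Fin (n+1)) // s.card = k+1}, ∃ cst : ℝ,
    ∀ y ∈ stdSimp k, ∀ w : Fin k → Fin k → ℝ,
      F (facePt S y) (fun i => faceDir S (w i)) = cst * Matrix.det (Matrix.of fun i j => w j i)

/-! ### Auxiliary lemmas -/

section Aux

variable {n k : ℕ}

/-- Construct a face from a strictly monotone vertex map. -/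
def mkFace (g : Fin (k+1) → Fin (n+1)) (hg : StrictMono g) :
    {s : Finset (Fin (n+1)) // s.card = k+1} :=
  ⟨Finset.univ.map ⟨g, hg.injective⟩, by simp⟩

lemma mkFace_iso (g : Fin (k+1) → Fin (n+1)) (hg : StrictMono g) (i : Fin (k+1)) :
    (((mkFace g hg).1.orderIsoOfFin (mkFace g hg).2 i : Fin (n+1))) = g i := by
  rw [Finset.coe_orderIsoOfFin_apply]
  have := Finset.orderEmbOfFin_unique (mkFace g hg).2 (f := g)
    (fun x => by simp [mkFace]) hg
  exact (congrFun this.symm i)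

lemma strictMono_cases_zero {h : Fin k → Fin n} (hh : StrictMono h) :
    StrictMono (Fin.cases 0 (fun s => (h s).succ) : Fin (k+1) → Fin (n+1)) := by
  intro i j hij
  obtain rfl | ⟨i', rfl⟩ := Fin.eq_zero_or_eq_succ i <;>
    obtain rfl | ⟨j', rfl⟩ := Fin.eq_zero_or_eq_succ j
  · exact absurd hij (lt_irrefl _)
  · simp [Fin.succ_pos]
  · exact absurd hij (Fin.not_lt_zero _)
  · simpa [Fin.succ_lt_succ_iff] using hh ((Fin.succ_lt_succ_iff).1 hij)

lemma strictMono_succ_comp {h : Fin (k+1) → Fin n} (hh : StrictMono h) :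
    StrictMono (fun s => (h s).succ : Fin (k+1) → Fin (n+1)) :=
  fun i j hij => Fin.succ_lt_succ_iff.2 (hh hij)

lemma measurableSet_stdSimp : MeasurableSet (stdSimp k) := by
  have : stdSimp k = (⋂ i, {x : Fin k → ℝ | 0 ≤ x i}) ∩ {x | ∑ i, x i ≤ 1} := by
    ext x; simp [stdSimp, Set.mem_iInter]
  rw [this]
  exact (MeasurableSet.iInter fun i =>
      measurableSet_le measurable_const (measurable_pi_apply i)).inter
    (measurableSet_le (by fun_prop) measurable_const)

lemma volume_stdSimp_pos : 0 < volume (stdSimp k) := by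
  have hsub : (Set.pi Set.univ fun _ : Fin k => Set.Ioo (0:ℝ) (1/(k+1))) ⊆ stdSimp k := by
    intro x hx
    simp only [Set.mem_pi, Set.mem_univ, Set.mem_Ioo, forall_true_left] at hx
    refine ⟨fun i => (hx i).1.le, ?_⟩
    calc ∑ i, x i ≤ ∑ _i : Fin k, (1/(k+1):ℝ) :=
          Finset.sum_le_sum fun i _ => (hx i).2.le
      _ = k * (1/(k+1)) := by simp [mul_comm]
      _ ≤ 1 := by
          rw [mul_one_div, div_le_one (by positivity)]
          exact_mod_cast Nat.le_succ k
  refine lt_of_lt_of_le ?_ (measure_mono hsub)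
  rw [MeasureTheory.volume_pi_pi, pos_iff_ne_zero, Finset.prod_ne_zero_iff]
  intro i _
  rw [Real.volume_Ioo]
  simp only [ne_eq, sub_zero, ENNReal.ofReal_eq_zero, not_le]
  positivity

lemma volume_stdSimp_lt_top : volume (stdSimp k) < ⊤ := by
  have hsub : stdSimp k ⊆ Set.pi Set.univ fun _ : Fin k => Set.Icc (0:ℝ) 1 := by
    intro x hx
    simp only [Set.mem_pi, Set.mem_univ, Set.mem_Icc, forall_true_left]
    intro i
    refine ⟨hx.1 i, ?_⟩
    calc x i ≤ ∑ j, x j := Finset.single_le_sum (fun j _ => hx.1 j) (Finset.mem_univ i)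
      _ ≤ 1 := hx.2
  refine lt_of_le_of_lt (measure_mono hsub) ?_
  rw [MeasureTheory.volume_pi_pi]
  simp [Real.volume_Icc]

lemma det_simplex (k : ℕ) (r : Fin (k+1)) :
    (Matrix.of fun (i s : Fin k) =>
      (if r.succAbove i = s.succ then (1:ℝ) else 0) -
        (if r.succAbove i = 0 then 1 else 0)).det = (-1)^(r:ℕ) := by
  rcases k with _ | m
  · have : r = 0 := Fin.fin_one_eq_zero r
    subst this
    simp [Matrix.det_fin_zero]
  · induction r using Fin.cases with
    | zero =>
        have hM : (Matrix.of fun (i s : Fin (m+1)) =>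
            (if (0:Fin (m+2)).succAbove i = s.succ then (1:ℝ) else 0) -
              (if (0:Fin (m+2)).succAbove i = 0 then 1 else 0)) = 1 := by
          ext i s
          simp only [Matrix.of_apply, Fin.succAbove_zero, Fin.succ_inj,
            Matrix.one_apply]
          simp only [Fin.succ_ne_zero, if_false]
          ring_nf
        rw [hM, Matrix.det_one]
        simp
    | succ q =>
        rw [Matrix.det_succ_row_zero]
        have hrow0 : ∀ j : Fin (m+1),
            (Matrix.of fun (i s : Fin (m+1)) =>
              (if (q.succ).succAbove i = s.succ then (1:ℝ) else 0) -
                (if (q.succ).succAbove i = 0 then 1 else 0)) 0 j = -1 := by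
          intro j
          have h0 : (q.succ).succAbove 0 = 0 := by
            rw [Fin.succAbove_of_castSucc_lt]
            · rfl
            · simp [Fin.castSucc_zero, Fin.succ_pos]
          simp [h0, (Fin.succ_ne_zero j).symm]
        have hminor : ∀ j : Fin (m+1), j ≠ q →
            ((Matrix.of fun (i s : Fin (m+1)) =>
              (if (q.succ).succAbove i = s.succ then (1:ℝ) else 0) -
                (if (q.succ).succAbove i = 0 then 1 else 0)).submatrix
                Fin.succ j.succAbove).det = 0 := by
          intro j hj
          obtain ⟨s0, hs0⟩ := Fin.exists_succAbove_eq (Ne.symm hj)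
          apply Matrix.det_eq_zero_of_column_eq_zero s0
          intro i
          simp only [Matrix.submatrix_apply, Matrix.of_apply, hs0,
            Fin.succ_succAbove_succ]
          rw [if_neg, if_neg (Fin.succ_ne_zero _)]
          · ring
          · simp only [Fin.succ_inj]
            exact Fin.succAbove_ne q i
        have hminorq :
            ((Matrix.of fun (i s : Fin (m+1)) =>
              (if (q.succ).succAbove i = s.succ then (1:ℝ) else 0) -
                (if (q.succ).succAbove i = 0 then 1 else 0)).submatrix
                Fin.succ q.succAbove).det = 1 := by
          have : ((Matrix.of fun (i s : Fin (m+1)) =>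
              (if (q.succ).succAbove i = s.succ then (1:ℝ) else 0) -
                (if (q.succ).succAbove i = 0 then 1 else 0)).submatrix
                Fin.succ q.succAbove) = 1 := by
            ext i s
            simp only [Matrix.submatrix_apply, Matrix.of_apply,
              Fin.succ_succAbove_succ, Fin.succ_inj, Fin.succAbove_right_inj,
              Matrix.one_apply]
            rw [if_neg (Fin.succ_ne_zero _)]
            ring_nf
          rw [this, Matrix.det_one]
        rw [Finset.sum_eq_single q]
        · rw [hrow0, hminorq]
          simp [pow_succ]
        · intro j _ hj
          rw [hminor j hj]
          ring
        · intro h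
          exact absurd (Finset.mem_univ q) h

lemma sum_single_one_smul (c : Fin k → (Fin n → ℝ)) (s₀ : Fin k) :
    ∑ s, (Pi.single s₀ (1:ℝ) : Fin k → ℝ) s • c s = c s₀ := by
  rw [Finset.sum_eq_single s₀]
  · simp
  · intro t _ ht
    rw [Pi.single_eq_of_ne ht, zero_smul]
  · intro h
    exact absurd (Finset.mem_univ s₀) h

lemma single_mem_stdSimp (s₀ : Fin k) : (Pi.single s₀ (1:ℝ)) ∈ stdSimp k := by
  constructor
  · intro i
    rcases eq_or_ne i s₀ with rfl | h
    · simp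
    · rw [Pi.single_eq_of_ne h]
  · rw [Finset.sum_pi_single']
    simp

lemma zero_mem_stdSimp : (0 : Fin k → ℝ) ∈ stdSimp k := by
  constructor
  · intro i; simp
  · simp

/-- The key consequence of `hconst` and `hint`: the form vanishes on every face. -/
lemma face_eval_zero {f : {s : Finset (Fin n) // s.card = k} → (Fin n → ℝ) → ℝ}
    (hconst : ConstOnFaces (formEval f))
    (hint : ∀ S : {s : Finset (Fin (n+1)) // s.card = k+1}, faceIntegral S (formEval f) = 0)
    (S : {s : Finset (Fin (n+1)) // s.card = k+1}) :
    ∀ y ∈ stdSimp k, ∀ w : Fin k → Fin k → ℝ,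
      formEval f (facePt S y) (fun i => faceDir S (w i)) = 0 := by
  obtain ⟨cst, hcst⟩ := hconst S
  have hdet1 : (Matrix.of fun (i j : Fin k) => Pi.single j (1:ℝ) i) = 1 := by
    ext i j
    simp [Matrix.one_apply, Pi.single_apply]
  have hI := hint S
  rw [faceIntegral] at hI
  have heq : Set.EqOn (fun y => formEval f (facePt S y) (fun s => faceDir S (Pi.single s 1)))
      (fun _ => cst) (stdSimp k) := by
    intro y hy
    have := hcst y hy (fun i => Pi.single i 1)
    simpa [hdet1] using this
  rw [MeasureTheory.setIntegral_congr_fun measurableSet_stdSimp heq,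
    MeasureTheory.setIntegral_const] at hI
  have hvol : (volume (stdSimp k)).toReal ≠ 0 :=
    ne_of_gt (ENNReal.toReal_pos (ne_of_gt volume_stdSimp_pos)
      (ne_of_lt volume_stdSimp_lt_top))
  have hc : cst = 0 := by
    rcases smul_eq_zero.1 hI with h | h
    · exact absurd h hvol
    · exact h
  intro y hy w
  rw [hcst y hy w, hc, zero_mul]

end Aux

section FaceLemmas

variable {n k : ℕ}

lemma vert_zero : vert n 0 = 0 := rfl

lemma vert_succ (m : Fin n) : vert n m.succ = Pi.single m 1 := by
  simp [vert]

/-- The face through the origin with directions indexed by `J`. -/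
def faceA (J : {s : Finset (Fin n) // s.card = k}) :
    {s : Finset (Fin (n+1)) // s.card = k+1} :=
  mkFace (Fin.cases 0 (fun s => ((J.1.orderEmbOfFin J.2) s).succ))
    (strictMono_cases_zero (J.1.orderEmbOfFin J.2).strictMono)

lemma facePt_faceA (J : {s : Finset (Fin n) // s.card = k}) (y : Fin k → ℝ) :
    facePt (faceA J) y
      = ∑ s, y s • (Pi.single (J.1.orderEmbOfFin J.2 s) (1:ℝ) : Fin n → ℝ) := by
  unfold facePt faceA
  simp only [mkFace_iso, Fin.cases_zero, Fin.cases_succ, vert_zero, vert_succ]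
  simp

lemma faceDir_faceA (J : {s : Finset (Fin n) // s.card = k}) (s₀ : Fin k) :
    faceDir (faceA J) (Pi.single s₀ 1)
      = Pi.single (J.1.orderEmbOfFin J.2 s₀) (1:ℝ) := by
  unfold faceDir faceA
  simp only [mkFace_iso, Fin.cases_zero, Fin.cases_succ, vert_zero, vert_succ, sub_zero]
  exact sum_single_one_smul _ s₀

lemma dxI_basis (J' J : {s : Finset (Fin n) // s.card = k}) :
    dxI J' (fun s => (Pi.single (J.1.orderEmbOfFin J.2 s) (1:ℝ) : Fin n → ℝ))
      = if J' = J then 1 else 0 := by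
  unfold dxI
  rcases eq_or_ne J' J with rfl | h
  · rw [if_pos rfl]
    have hone : (Matrix.of fun i j =>
        (Pi.single (J'.1.orderEmbOfFin J'.2 j) (1:ℝ) : Fin n → ℝ)
          ((J'.1.orderIsoOfFin J'.2 i : Fin n))) = 1 := by
      ext i j
      rw [Matrix.of_apply, Finset.coe_orderIsoOfFin_apply, Pi.single_apply,
        Matrix.one_apply]
      simp [(J'.1.orderEmbOfFin J'.2).injective.eq_iff]
    rw [hone, Matrix.det_one]
  · rw [if_neg h]
    have hns : ¬ J'.1 ⊆ J.1 := by
      intro hsub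
      exact h (Subtype.ext (Finset.eq_of_subset_of_card_le hsub (by rw [J'.2, J.2])))
    obtain ⟨x0, hx0', hx0⟩ := Finset.not_subset.1 hns
    have hrg : x0 ∈ Set.range (J'.1.orderEmbOfFin J'.2) := by
      rw [Finset.range_orderEmbOfFin]; exact hx0'
    obtain ⟨i0, hi0⟩ := hrg
    apply Matrix.det_eq_zero_of_row_eq_zero i0
    intro j
    rw [Matrix.of_apply, Finset.coe_orderIsoOfFin_apply, hi0]
    exact Pi.single_eq_of_ne
      (fun hEq => hx0 (by rw [hEq]; exact Finset.orderEmbOfFin_mem _ _ j)) 1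

lemma coeff_vanish_A {f : {s : Finset (Fin n) // s.card = k} → (Fin n → ℝ) → ℝ}
    (hface : ∀ S : {s : Finset (Fin (n+1)) // s.card = k+1}, ∀ y ∈ stdSimp k,
      ∀ w : Fin k → Fin k → ℝ, formEval f (facePt S y) (fun i => faceDir S (w i)) = 0)
    (J : {s : Finset (Fin n) // s.card = k}) (y : Fin k → ℝ) (hy : y ∈ stdSimp k) :
    f J (∑ s, y s • (Pi.single (J.1.orderEmbOfFin J.2 s) (1:ℝ) : Fin n → ℝ)) = 0 := by
  have h := hface (faceA J) y hy (fun i => Pi.single i 1)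
  simp only [faceDir_faceA, facePt_faceA] at h
  rw [formEval] at h
  simpa [dxI_basis, mul_ite] using h

lemma coeff_zero {f : {s : Finset (Fin n) // s.card = k} → (Fin n → ℝ) → ℝ}
    (hface : ∀ S : {s : Finset (Fin (n+1)) // s.card = k+1}, ∀ y ∈ stdSimp k,
      ∀ w : Fin k → Fin k → ℝ, formEval f (facePt S y) (fun i => faceDir S (w i)) = 0)
    (J : {s : Finset (Fin n) // s.card = k}) : f J 0 = 0 := by
  have h := coeff_vanish_A hface J 0 zero_mem_stdSimp
  simpa using h

lemma coeff_mem {f : {s : Finset (Fin n) // s.card = k} → (Fin n → ℝ) → ℝ}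
    (hface : ∀ S : {s : Finset (Fin (n+1)) // s.card = k+1}, ∀ y ∈ stdSimp k,
      ∀ w : Fin k → Fin k → ℝ, formEval f (facePt S y) (fun i => faceDir S (w i)) = 0)
    (J : {s : Finset (Fin n) // s.card = k}) {m : Fin n} (hm : m ∈ J.1) :
    f J (Pi.single m 1) = 0 := by
  have hrg : m ∈ Set.range (J.1.orderEmbOfFin J.2) := by
    rw [Finset.range_orderEmbOfFin]; exact hm
  obtain ⟨s₀, rfl⟩ := hrg
  have h := coeff_vanish_A hface J (Pi.single s₀ 1) (single_mem_stdSimp s₀)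
  rwa [sum_single_one_smul] at h

end FaceLemmas

section FaceB

variable {n k : ℕ}

lemma facePt_mkFace (g : Fin (k+1) → Fin (n+1)) (hg : StrictMono g) (y : Fin k → ℝ) :
    facePt (mkFace g hg) y
      = vert n (g 0) + ∑ s, y s • (vert n (g s.succ) - vert n (g 0)) := by
  unfold facePt
  simp only [mkFace_iso]

lemma faceDir_mkFace (g : Fin (k+1) → Fin (n+1)) (hg : StrictMono g) (w : Fin k → ℝ) :
    faceDir (mkFace g hg) w = ∑ s, w s • (vert n (g s.succ) - vert n (g 0)) := by
  unfold faceDir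
  simp only [mkFace_iso]

lemma coeff_not_mem {f : {s : Finset (Fin n) // s.card = k} → (Fin n → ℝ) → ℝ}
    (hface : ∀ S : {s : Finset (Fin (n+1)) // s.card = k+1}, ∀ y ∈ stdSimp k,
      ∀ w : Fin k → Fin k → ℝ, formEval f (facePt S y) (fun i => faceDir S (w i)) = 0)
    (J : {s : Finset (Fin n) // s.card = k}) {m : Fin n} (hm : m ∉ J.1) :
    f J (Pi.single m 1) = 0 := by
  have hV : (insert m J.1).card = k + 1 := by
    rw [Finset.card_insert_of_notMem hm, J.2]
  set e := (insert m J.1).orderEmbOfFin hV with hedef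
  have hmV : m ∈ Set.range e := by
    rw [hedef, Finset.range_orderEmbOfFin]; exact Finset.mem_insert_self m J.1
  obtain ⟨r, hr⟩ := hmV
  have hsm : StrictMono (fun s : Fin (k+1) => (e s).succ) :=
    strictMono_succ_comp e.strictMono
  have hdir : ∀ s₀ : Fin k,
      faceDir (mkFace (fun s : Fin (k+1) => (e s).succ) hsm) (Pi.single s₀ 1)
      = (Pi.single (e s₀.succ) (1:ℝ) : Fin n → ℝ) - Pi.single (e 0) 1 := by
    intro s₀
    rw [faceDir_mkFace]
    simp only [vert_succ]
    exact sum_single_one_smul _ s₀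
  have hpt : ∃ y ∈ stdSimp k,
      facePt (mkFace (fun s : Fin (k+1) => (e s).succ) hsm) y = Pi.single m 1 := by
    rcases Fin.eq_zero_or_eq_succ r with rfl | ⟨t, rfl⟩
    · refine ⟨0, zero_mem_stdSimp, ?_⟩
      rw [facePt_mkFace]
      simp only [vert_succ]
      simp [hr]
    · refine ⟨Pi.single t 1, single_mem_stdSimp t, ?_⟩
      rw [facePt_mkFace]
      simp only [vert_succ]
      rw [sum_single_one_smul, hr]
      abel
  obtain ⟨y, hy, hxy⟩ := hpt
  have h := hface (mkFace (fun s : Fin (k+1) => (e s).succ) hsm) y hy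
    (fun i => Pi.single i 1)
  simp only [hdir, hxy, formEval] at h
  have hJe : ∀ i : Fin k, J.1.orderEmbOfFin J.2 i = e (r.succAbove i) := by
    have hmono : StrictMono (fun i : Fin k => e (r.succAbove i)) :=
      fun a b hab => e.strictMono (Fin.strictMono_succAbove r hab)
    have hmem : ∀ i, e (r.succAbove i) ∈ J.1 := by
      intro i
      have h1 : e (r.succAbove i) ∈ insert m J.1 := Finset.orderEmbOfFin_mem _ _ _
      have h2 : e (r.succAbove i) ≠ m := by
        rw [← hr]
        exact fun hEq => Fin.succAbove_ne r i (e.injective hEq)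
      rcases Finset.mem_insert.1 h1 with h3 | h3
      · exact absurd h3 h2
      · exact h3
    intro i
    exact (congrFun (Finset.orderEmbOfFin_unique J.2 hmem hmono) i).symm
  have hdxJ : dxI J (fun s =>
      (Pi.single (e s.succ) (1:ℝ) : Fin n → ℝ) - Pi.single (e 0) 1) = (-1)^(r:ℕ) := by
    unfold dxI
    rw [← det_simplex k r]
    congr 1
    ext i s
    simp only [Matrix.of_apply, Finset.coe_orderIsoOfFin_apply, hJe i,
      Pi.sub_apply, Pi.single_apply, e.injective.eq_iff]
  rw [Finset.sum_eq_single J] at h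
  · rw [hdxJ] at h
    rcases mul_eq_zero.1 h with h' | h'
    · exact h'
    · exact absurd h' (pow_ne_zero _ (by norm_num))
  · intro J' _ hJ'
    by_cases hmJ' : m ∈ J'.1
    · rw [coeff_mem hface J' hmJ', zero_mul]
    · have hns : ∃ x0 ∈ J'.1, x0 ∉ insert m J.1 := by
        by_contra hcon
        push_neg at hcon
        have hsub : J'.1 ⊆ (insert m J.1).erase m := fun x hx =>
          Finset.mem_erase.2 ⟨fun hEq => hmJ' (hEq ▸ hx), hcon x hx⟩
        rw [Finset.erase_insert hm] at hsub
        exact hJ' (Subtype.ext (Finset.eq_of_subset_of_card_le hsub (by rw [J'.2, J.2])))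
      obtain ⟨x0, hx0', hx0⟩ := hns
      have hrg : x0 ∈ Set.range (J'.1.orderEmbOfFin J'.2) := by
        rw [Finset.range_orderEmbOfFin]; exact hx0'
      obtain ⟨i0, hi0⟩ := hrg
      have hzero : dxI J' (fun s =>
          (Pi.single (e s.succ) (1:ℝ) : Fin n → ℝ) - Pi.single (e 0) 1) = 0 := by
        unfold dxI
        apply Matrix.det_eq_zero_of_row_eq_zero i0
        intro j
        have hx0e : ∀ a : Fin (k+1), x0 ≠ e a :=
          fun a hEq => hx0 (by rw [hEq]; exact Finset.orderEmbOfFin_mem _ _ _)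
        simp only [Matrix.of_apply, Finset.coe_orderIsoOfFin_apply, Pi.sub_apply]
        rw [hi0, Pi.single_eq_of_ne (hx0e _), Pi.single_eq_of_ne (hx0e _), sub_zero]
      rw [hzero, mul_zero]
  · intro hJu
    exact absurd (Finset.mem_univ J) hJu

lemma affine_eq_zero {g : (Fin n → ℝ) → ℝ} (hg : IsAffineFn g) (h0 : g 0 = 0)
    (h1 : ∀ m, g (Pi.single m 1) = 0) (x : Fin n → ℝ) : g x = 0 := by
  obtain ⟨a, b, hab⟩ := hg
  have hb : b = 0 := by
    have h := hab 0
    simp only [Pi.zero_apply, mul_zero, Finset.sum_const_zero, zero_add] at h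
    rw [h0] at h
    exact h.symm
  have ha : ∀ m, a m = 0 := by
    intro m
    have h := hab (Pi.single m 1)
    simp only [Pi.single_apply, mul_ite, mul_one, mul_zero,
      Finset.sum_ite_eq', Finset.mem_univ, if_true, hb, add_zero] at h
    rw [h1 m] at h
    exact h.symm
  rw [hab x]
  simp [ha, hb]

end FaceB
/-- A `k`-form with affine coefficients and constant pullbacks to all `k`-faces, all of whose
integrals over `k`-faces vanish, is identically zero on the standard `n`-simplex. -/
theorem zero_integrals_imply_zero {n k : ℕ}
    (f : {s : Finset (Fin n) // s.card = k} → (Fin n → ℝ) → ℝ)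
    (hf : ∀ I, IsAffineFn (f I))
    (hconst : ConstOnFaces (formEval f))
    (hint : ∀ S : {s : Finset (Fin (n+1)) // s.card = k+1}, faceIntegral S (formEval f) = 0) :
    ∀ x ∈ stdSimp n, ∀ v : Fin k → Fin n → ℝ, formEval f x v = 0 := by
  have hface := fun S => face_eval_zero hconst hint S
  intro x _hx v
  rw [formEval]
  apply Finset.sum_eq_zero
  intro J _
  have hJ0 : f J 0 = 0 := coeff_zero hface J
  have hj : ∀ m, f J (Pi.single m 1) = 0 := by
    intro m
    by_cases hm : m ∈ J.1
    · exact coeff_mem hface J hm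
    · exact coeff_not_mem hface J hm
  rw [affine_eq_zero (hf J) hJ0 hj x, zero_mul]
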